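/- Let R be a ring and suppose we are given two long exact sequences of R-modules, ⋯ → A_k →^{φ_k} B_k →^{ψ_k} C_k →^{δ_k} A_{k−1} → ⋯ and ⋯ → A'_k →^{φ'_k} B'_k →^{ψ'_k} C'_k →^{δ'_k} A'_{k−1} → ⋯ (indexed by k ∈ ℤ), together with module maps f_k : A_k → A'_k, g_k : B_k → B'_k, h_k : C_k → C'_k making every square commute, and such that every h_k is an isomorphism. Then the sequence ⋯ → A_k →^{(φ_k, f_k)} B_k ⊕ A'_k →^{g_k − φ'_k} B'_k →^{δ_k ∘ h_k^{−1} ∘ ψ'_k} A_{k−1} → ⋯ is exact (at every position). -/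

import Mathlib

/-- **algebraic Mayer–Vietoris.**
Given two long exact sequences of `R`-modules
`⋯ → A k →^{φ k} B k →^{ψ k} C k →^{δ k} A (k−1) → ⋯` and
`⋯ → A' k →^{φ' k} B' k →^{ψ' k} C' k →^{δ' k} A' (k−1) → ⋯`,
connected by a commutative ladder `f, g, h` in which every vertical map
`h k : C k → C' k` is an isomorphism (encoded as a linear equivalence), the collapsed
sequence `⋯ → A k →^{(φ k, f k)} B k ⊕ A' k →^{g k − φ' k} B' k →^{δ k ∘ (h k)⁻¹ ∘ ψ' k}
A (k−1) → ⋯` is exact at every position. -/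
theorem algebraic_mayer_vietoris
    (R : Type*) [Ring R]
    (A B C A' B' C' : ℤ → Type*)
    [∀ k, AddCommGroup (A k)] [∀ k, Module R (A k)]
    [∀ k, AddCommGroup (B k)] [∀ k, Module R (B k)]
    [∀ k, AddCommGroup (C k)] [∀ k, Module R (C k)]
    [∀ k, AddCommGroup (A' k)] [∀ k, Module R (A' k)]
    [∀ k, AddCommGroup (B' k)] [∀ k, Module R (B' k)]
    [∀ k, AddCommGroup (C' k)] [∀ k, Module R (C' k)]
    (φ : ∀ k, A k →ₗ[R] B k) (ψ : ∀ k, B k →ₗ[R] C k) (δ : ∀ k, C k →ₗ[R] A (k - 1))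
    (φ' : ∀ k, A' k →ₗ[R] B' k) (ψ' : ∀ k, B' k →ₗ[R] C' k) (δ' : ∀ k, C' k →ₗ[R] A' (k - 1))
    (f : ∀ k, A k →ₗ[R] A' k) (g : ∀ k, B k →ₗ[R] B' k) (h : ∀ k, C k ≃ₗ[R] C' k)
    -- exactness of the first row
    (hex₁ : ∀ k, Function.Exact (φ k) (ψ k))
    (hex₂ : ∀ k, Function.Exact (ψ k) (δ k))
    (hex₃ : ∀ k, Function.Exact (δ k) (φ (k - 1)))
    -- exactness of the second row
    (hex₁' : ∀ k, Function.Exact (φ' k) (ψ' k))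
    (hex₂' : ∀ k, Function.Exact (ψ' k) (δ' k))
    (hex₃' : ∀ k, Function.Exact (δ' k) (φ' (k - 1)))
    -- commutativity of the ladder
    (hsq₁ : ∀ k, (g k) ∘ₗ (φ k) = (φ' k) ∘ₗ (f k))
    (hsq₂ : ∀ k, ((h k).toLinearMap) ∘ₗ (ψ k) = (ψ' k) ∘ₗ (g k))
    (hsq₃ : ∀ k, (f (k - 1)) ∘ₗ (δ k) = (δ' k) ∘ₗ ((h k).toLinearMap)) :
    ∀ k : ℤ,
      Function.Exact ((φ k).prod (f k))
          ((g k) ∘ₗ (LinearMap.fst R (B k) (A' k)) - (φ' k) ∘ₗ (LinearMap.snd R (B k) (A' k))) ∧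
      Function.Exact
          ((g k) ∘ₗ (LinearMap.fst R (B k) (A' k)) - (φ' k) ∘ₗ (LinearMap.snd R (B k) (A' k)))
          ((δ k) ∘ₗ (h k).symm.toLinearMap ∘ₗ (ψ' k)) ∧
      Function.Exact ((δ k) ∘ₗ (h k).symm.toLinearMap ∘ₗ (ψ' k))
          ((φ (k - 1)).prod (f (k - 1))) := by
  intro k
  obtain ⟨m, rfl⟩ : ∃ m, m - 1 = k := ⟨k + 1, by ring⟩
  set k := m - 1 with hkdef
  have e3 : Function.Exact (δ m) (φ k) := hex₃ m
  have e3' : Function.Exact (δ' m) (φ' k) := hex₃' m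
  have esq3 : ∀ c, f k (δ m c) = δ' m (h m c) := fun c => LinearMap.congr_fun (hsq₃ m) c
  have sq1 : ∀ a, g k (φ k a) = φ' k (f k a) := fun a => LinearMap.congr_fun (hsq₁ k) a
  have sq2 : ∀ b, h k (ψ k b) = ψ' k (g k b) := fun b => LinearMap.congr_fun (hsq₂ k) b
  have sq3 : ∀ c, f (k-1) (δ k c) = δ' k (h k c) := fun c => LinearMap.congr_fun (hsq₃ k) c
  refine ⟨?_, ?_, ?_⟩
  · rintro ⟨b, a'⟩
    simp only [LinearMap.sub_apply, LinearMap.coe_comp, Function.comp_apply,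
      LinearMap.fst_apply, LinearMap.snd_apply, sub_eq_zero, Set.mem_range,
      LinearMap.prod_apply, Function.prod, Prod.mk.injEq]
    constructor
    · intro hba
      have hψb : ψ k b = 0 := by
        have h0 : h k (ψ k b) = 0 := by
          rw [sq2, hba, (hex₁' k).apply_apply_eq_zero]
        simpa using (h k).injective (by simpa using h0)
      obtain ⟨a, ha⟩ := (hex₁ k b).mp hψb
      have h1 : φ' k (a' - f k a) = 0 := by
        rw [map_sub, ← sq1, ha, hba, sub_self]
      obtain ⟨c', hc'⟩ := (e3' _).mp h1
      refine ⟨a + δ m ((h m).symm c'), ?_, ?_⟩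
      · rw [map_add, e3.apply_apply_eq_zero, add_zero, ha]
      · rw [map_add, esq3, (h m).apply_symm_apply, hc']
        abel
    · rintro ⟨a, ha1, ha2⟩
      rw [← ha1, ← ha2, sq1]
  · intro b'
    simp only [LinearMap.sub_apply, LinearMap.coe_comp, Function.comp_apply,
      LinearEquiv.coe_coe, LinearMap.fst_apply, LinearMap.snd_apply, Set.mem_range]
    constructor
    · intro h0
      obtain ⟨b, hb⟩ := (hex₂ k _).mp h0
      have hψ' : ψ' k (b' - g k b) = 0 := by
        rw [map_sub, ← sq2, hb, (h k).apply_symm_apply, sub_self]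
      obtain ⟨a', ha'⟩ := (hex₁' k _).mp hψ'
      exact ⟨(b, -a'), by rw [map_neg, sub_neg_eq_add, ha']; abel⟩
    · rintro ⟨⟨b, a'⟩, hba⟩
      rw [← hba, map_sub, (hex₁' k).apply_apply_eq_zero, sub_zero, ← sq2,
        (h k).symm_apply_apply, (hex₂ k).apply_apply_eq_zero]
  · intro a
    simp only [LinearMap.prod_apply, Function.prod, Prod.mk_eq_zero, LinearMap.coe_comp,
      Function.comp_apply, LinearEquiv.coe_coe, Set.mem_range]
    constructor
    · rintro ⟨hφ, hf⟩
      obtain ⟨c, hc⟩ := (hex₃ k a).mp hφ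
      have h0 : δ' k (h k c) = 0 := by rw [← sq3, hc, hf]
      obtain ⟨b', hb'⟩ := (hex₂' k _).mp h0
      exact ⟨b', by rw [hb', (h k).symm_apply_apply, hc]⟩
    · rintro ⟨b', hb'⟩
      subst hb'
      exact ⟨(hex₃ k).apply_apply_eq_zero _,
        by rw [sq3, (h k).apply_symm_apply, (hex₂' k).apply_apply_eq_zero]⟩
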